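/- Let q be a complex quadratic form on ℝ^{2n} with Hamilton map F, and let S = (⋂_{j=0}^{2n-1} Ker[Re F (Im F)^j]) ∩ ℝ^{2n} be its singular space. Then both the quadratic form Re q and the quadratic form H_{Im q}² Re q (whose Hamilton map is 4[Im F,[Im F, Re F]]) vanish identically on S. -/
import Mathlib


open scoped BigOperators

/-- The canonical symplectic form on `ℝ^{2n}`: `σ((x,ξ),(y,η)) = ξ·y − x·η`. -/
def sigmaR (n : ℕ) (X Y : (Fin n → ℝ) × (Fin n → ℝ)) : ℝ :=
  (∑ i, X.2 i * Y.1 i) - ∑ i, X.1 i * Y.2 i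

lemma sigmaR_zero_right (n : ℕ) (Y : (Fin n → ℝ) × (Fin n → ℝ)) :
    sigmaR n Y 0 = 0 := by simp [sigmaR]

lemma sigmaR_smul_right (n : ℕ) (c : ℝ) (X Y : (Fin n → ℝ) × (Fin n → ℝ)) :
    sigmaR n X (c • Y) = c * sigmaR n X Y := by
  simp [sigmaR, Finset.mul_sum, mul_sub, mul_left_comm]

/-- Let `q` be a complex quadratic form on `ℝ^{2n}` with Hamilton map `F = F₁ + i F₂`
(the real parts `F₁ = Re F`, `F₂ = Im F` being the Hamilton maps of `Re q`, `Im q`, so that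
`σ(X, Fᵢ Y) = σ(Y, Fᵢ X)`).  If `X` lies in the singular space
`S = ⋂_{j=0}^{2n-1} Ker[Re F (Im F)^j]`, then both `Re q(X) = σ(X, F₁ X)` and the quadratic
form `H_{Im q}² Re q`, whose Hamilton map is `4[Im F,[Im F, Re F]]`, vanish at `X`. -/
theorem stmt_3 (n : ℕ)
    (F₁ F₂ : ((Fin n → ℝ) × (Fin n → ℝ)) →ₗ[ℝ] ((Fin n → ℝ) × (Fin n → ℝ)))
    (hF₁ : ∀ X Y, sigmaR n X (F₁ Y) = sigmaR n Y (F₁ X))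
    (hF₂ : ∀ X Y, sigmaR n X (F₂ Y) = sigmaR n Y (F₂ X))
    (X : (Fin n → ℝ) × (Fin n → ℝ))
    (hX : ∀ j < 2 * n, F₁ ((F₂ ^ j) X) = 0) :
    sigmaR n X (F₁ X) = 0 ∧
      sigmaR n X (((4 : ℝ) • (F₂ * (F₂ * F₁ - F₁ * F₂) - (F₂ * F₁ - F₁ * F₂) * F₂)) X) = 0 := by
  rcases Nat.eq_zero_or_pos n with hn | hn
  · subst hn
    constructor <;> simp [sigmaR]
  · have h0 : F₁ X = 0 := by simpa using hX 0 (by omega)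
    have h1 : F₁ (F₂ X) = 0 := by simpa [pow_one] using hX 1 (by omega)
    constructor
    · rw [h0]; exact sigmaR_zero_right n X
    · have expand : ((4 : ℝ) • (F₂ * (F₂ * F₁ - F₁ * F₂) - (F₂ * F₁ - F₁ * F₂) * F₂)) X
          = (4 : ℝ) • (F₁ (F₂ (F₂ X))) := by
        simp [Module.End.mul_apply, h0, h1]
      rw [expand, sigmaR_smul_right, hF₁ X (F₂ (F₂ X)), h0, sigmaR_zero_right, mul_zero]
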